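/- (Semi-discrete energy identity for the 1D wave system with dual-pairing SBP operators, 1D content of Theorem 4.3.) Let n ∈ ℕ, let H be an (n+1)×(n+1) real diagonal matrix with positive diagonal entries, and let D₊, D₋ be (n+1)×(n+1) real matrices satisfying the SBP property: for all f, g ∈ ℝ^(n+1), (D₊ f)ᵀ H g + fᵀ H (D₋ g) = f(n)·g(n) − f(0)·g(0). Let v, σ : ℝ → ℝ^(n+1) be differentiable and satisfy the semi-discrete 1D wave system dv/dt = D₋ σ and dσ/dt = D₊ v. Then the discrete energy E(t) = (1/2)·( v(t)ᵀ H v(t) + σ(t)ᵀ H σ(t) ) satisfies dE/dt = v(t)(n)·σ(t)(n) − v(t)(0)·σ(t)(0). -/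

import Mathlib

open Matrix

/-- Semi-discrete energy identity for the 1D wave system with dual-pairing SBP
operators (1D content of Theorem 4.3): the energy rate reduces to boundary terms. -/
theorem dp_sbp_semidiscrete_energy_identity
    (n : ℕ)
    (H Dp Dm : Matrix (Fin (n + 1)) (Fin (n + 1)) ℝ)
    (hHdiag : ∃ d : Fin (n + 1) → ℝ, (∀ i, 0 < d i) ∧ H = Matrix.diagonal d)
    (hSBP : ∀ f g : Fin (n + 1) → ℝ,
        (Dp.mulVec f) ⬝ᵥ (H.mulVec g) + f ⬝ᵥ (H.mulVec (Dm.mulVec g))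
          = f (Fin.last n) * g (Fin.last n) - f 0 * g 0)
    (v σ : ℝ → Fin (n + 1) → ℝ)
    (hv : ∀ t, HasDerivAt v (Dm.mulVec (σ t)) t)
    (hσ : ∀ t, HasDerivAt σ (Dp.mulVec (v t)) t)
    (E : ℝ → ℝ)
    (hE : ∀ t, E t = (1 / 2) * ((v t) ⬝ᵥ (H.mulVec (v t))
        + (σ t) ⬝ᵥ (H.mulVec (σ t)))) :
    ∀ t, HasDerivAt E
      (v t (Fin.last n) * σ t (Fin.last n) - v t 0 * σ t 0) t := by
  intro t
  obtain ⟨d, hdpos, rfl⟩ := hHdiag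
  have hEeq : E = fun s => (1 / 2) * ((v s) ⬝ᵥ ((Matrix.diagonal d).mulVec (v s))
      + (σ s) ⬝ᵥ ((Matrix.diagonal d).mulVec (σ s))) := funext hE
  subst hEeq
  have hv' := hasDerivAt_pi.1 (hv t)
  have hσ' := hasDerivAt_pi.1 (hσ t)
  have key : ∀ (f : ℝ → Fin (n + 1) → ℝ) (f' : Fin (n + 1) → ℝ),
      (∀ i, HasDerivAt (fun s => f s i) (f' i) t) →
      HasDerivAt (fun s => (f s) ⬝ᵥ ((Matrix.diagonal d).mulVec (f s)))
        (2 * (f t ⬝ᵥ (Matrix.diagonal d).mulVec f')) t := by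
    intro f f' hf
    have hs : HasDerivAt (fun s => ∑ i, f s i * (d i * f s i))
        (∑ i, (f' i * (d i * f t i) + f t i * (d i * f' i))) t :=
      HasDerivAt.fun_sum fun i _ => (hf i).mul ((hf i).const_mul (d i))
    convert hs using 1
    · funext s
      simp [dotProduct, Matrix.mulVec_diagonal]
    have hdp : f t ⬝ᵥ (Matrix.diagonal d) *ᵥ f' = ∑ i, f t i * (d i * f' i) := by
      simp [dotProduct, Matrix.mulVec_diagonal]
    rw [hdp, Finset.mul_sum]
    exact Finset.sum_congr rfl fun i _ => by ring
  have h1 := key v (Dm.mulVec (σ t)) hv'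
  have h2 := key σ (Dp.mulVec (v t)) hσ'
  have hD := (h1.add h2).const_mul ((1 : ℝ) / 2)
  have hcomm : σ t ⬝ᵥ (Matrix.diagonal d).mulVec (Dp.mulVec (v t))
      = (Dp.mulVec (v t)) ⬝ᵥ (Matrix.diagonal d).mulVec (σ t) := by
    simp [dotProduct, Matrix.mulVec_diagonal]
    apply Finset.sum_congr rfl
    intros; ring
  convert hD using 1
  · rfl
  · rfl
  · rfl
  rw [hcomm, ← hSBP (v t) (σ t)]
  ring
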